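/- Let P(z₁, …, zₙ) = Σ_{S ⊆ [n]} p_S ∏_{i ∈ S} z_i be a multilinear polynomial with all coefficients p_S real and nonzero, satisfying the symmetry p_S = p_{[n]∖S} for every S. For each j write P = A_j z_j + B_j with A_j, B_j multilinear in the variables z_i, i ≠ j, and suppose that for every j, A_j(z₁, …, z_{j−1}, z_{j+1}, …, zₙ) ≠ 0 whenever |z_i| ≥ 1 for all i ≠ j. Then P has the Lee-Yang property. -/

import Mathlib

open scoped Classical
open Finset Metric Filter

noncomputable section LYaux

variable {n : ℕ}

def Aj (p : Finset (Fin n) → ℝ) (j : Fin n) (z : Fin n → ℂ) : ℂ :=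
  ∑ S ∈ (univ : Finset (Finset (Fin n))).filter (fun S => j ∉ S),
    (p (insert j S) : ℂ) * ∏ i ∈ S, z i

def Bj (p : Finset (Fin n) → ℝ) (j : Fin n) (z : Fin n → ℂ) : ℂ :=
  ∑ S ∈ (univ : Finset (Finset (Fin n))).filter (fun S => j ∉ S),
    (p S : ℂ) * ∏ i ∈ S, z i

def AA (p : Finset (Fin n) → ℝ) (j i : Fin n) (z : Fin n → ℂ) : ℂ :=
  ∑ T ∈ (univ : Finset (Finset (Fin n))).filter (fun T => j ∉ T ∧ i ∉ T),
    (p (insert j (insert i T)) : ℂ) * ∏ l ∈ T, z l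
def AB (p : Finset (Fin n) → ℝ) (j i : Fin n) (z : Fin n → ℂ) : ℂ :=
  ∑ T ∈ (univ : Finset (Finset (Fin n))).filter (fun T => j ∉ T ∧ i ∉ T),
    (p (insert j T) : ℂ) * ∏ l ∈ T, z l
def BA (p : Finset (Fin n) → ℝ) (j i : Fin n) (z : Fin n → ℂ) : ℂ :=
  ∑ T ∈ (univ : Finset (Finset (Fin n))).filter (fun T => j ∉ T ∧ i ∉ T),
    (p (insert i T) : ℂ) * ∏ l ∈ T, z l
def BB (p : Finset (Fin n) → ℝ) (j i : Fin n) (z : Fin n → ℂ) : ℂ :=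
  ∑ T ∈ (univ : Finset (Finset (Fin n))).filter (fun T => j ∉ T ∧ i ∉ T),
    (p T : ℂ) * ∏ l ∈ T, z l

lemma sum_split (p : Finset (Fin n) → ℝ) (j : Fin n) (z : Fin n → ℂ) :
    (∑ S : Finset (Fin n), (p S : ℂ) * ∏ i ∈ S, z i) = Aj p j z * z j + Bj p j z := by
  rw [← Finset.sum_filter_add_sum_filter_not univ (fun S => j ∈ S)]
  have : (∑ S ∈ univ.filter (fun S => j ∈ S), (p S : ℂ) * ∏ i ∈ S, z i)
      = Aj p j z * z j := by
    rw [Aj, Finset.sum_mul]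
    refine Finset.sum_nbij' (fun S => S.erase j) (fun T => insert j T) ?_ ?_ ?_ ?_ ?_
    · intro S hS
      simp only [mem_filter, mem_univ, true_and] at hS ⊢
      exact Finset.notMem_erase _ _
    · intro T hT
      simp only [mem_filter, mem_univ, true_and] at hT ⊢
      exact Finset.mem_insert_self _ _
    · intro S hS
      simp only [mem_filter, mem_univ, true_and] at hS
      exact Finset.insert_erase hS
    · intro T hT
      simp only [mem_filter, mem_univ, true_and] at hT
      exact Finset.erase_insert hT
    · intro S hS
      simp only [mem_filter, mem_univ, true_and] at hS
      rw [Finset.insert_erase hS, mul_assoc, Finset.prod_erase_mul _ _ hS]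
  rw [this]; rfl

lemma Bj_eq_compl (p : Finset (Fin n) → ℝ) (hsym : ∀ S : Finset (Fin n), p S = p Sᶜ)
    (j : Fin n) (z : Fin n → ℂ) :
    Bj p j z = ∑ T ∈ (univ : Finset (Finset (Fin n))).filter (fun T => j ∉ T),
      (p (insert j T) : ℂ) * ∏ l ∈ (insert j T)ᶜ, z l := by
  rw [Bj]
  refine Finset.sum_nbij' (fun S => Sᶜ.erase j) (fun T => (insert j T)ᶜ) ?_ ?_ ?_ ?_ ?_
  · intro S hS; simp
  · intro T hT
    simp only [mem_filter, mem_univ, true_and, Finset.mem_compl]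
    exact fun h => h (Finset.mem_insert_self _ _)
  · intro S hS
    simp only [mem_filter, mem_univ, true_and] at hS
    show (insert j (Sᶜ.erase j))ᶜ = S
    rw [Finset.insert_erase (Finset.mem_compl.2 hS), compl_compl]
  · intro T hT
    simp only [mem_filter, mem_univ, true_and] at hT
    show ((insert j T)ᶜ)ᶜ.erase j = T
    rw [compl_compl, Finset.erase_insert hT]
  · intro S hS
    simp only [mem_filter, mem_univ, true_and] at hS
    rw [Finset.insert_erase (Finset.mem_compl.2 hS), compl_compl, ← hsym]

def Complex.abs : AbsoluteValue ℂ ℝ := NormedField.toAbsoluteValue ℂ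

lemma Complex.norm_eq_abs (z : ℂ) : ‖z‖ = Complex.abs z := rfl

lemma Complex.abs_conj (z : ℂ) : Complex.abs ((starRingEnd ℂ) z) = Complex.abs z :=
  Complex.norm_conj z

lemma Complex.abs_ofReal (r : ℝ) : Complex.abs (r : ℂ) = |r| := by
  rw [← Complex.norm_eq_abs, Complex.norm_real, Real.norm_eq_abs]

lemma Complex.continuous_abs : Continuous Complex.abs := continuous_norm

lemma Complex.sq_abs (z : ℂ) : Complex.abs z ^ 2 = Complex.normSq z := Complex.sq_norm z

lemma torus_abs (p : Finset (Fin n) → ℝ) (hsym : ∀ S : Finset (Fin n), p S = p Sᶜ)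
    (j : Fin n) (z : Fin n → ℂ) (hz : ∀ l, l ≠ j → Complex.abs (z l) = 1) :
    Complex.abs (Bj p j z) = Complex.abs (Aj p j z) := by
  have hz0 : ∀ l, l ≠ j → z l ≠ 0 := fun l hl => by
    intro h; have := hz l hl; rw [h] at this; simp at this
  have key : Bj p j z = (∏ l ∈ univ.erase j, z l) * (starRingEnd ℂ) (Aj p j z) := by
    rw [Bj_eq_compl p hsym j z, Aj, map_sum, Finset.mul_sum]
    refine Finset.sum_congr rfl ?_
    intro T hT
    simp only [mem_filter, mem_univ, true_and] at hT
    have hTsub : T ⊆ univ.erase j := fun l hl => Finset.mem_erase.2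
      ⟨fun h => hT (h ▸ hl), Finset.mem_univ l⟩
    have hcompl : (insert j T)ᶜ = (univ.erase j) \ T := by
      ext l
      simp only [Finset.mem_compl, Finset.mem_insert, Finset.mem_sdiff, Finset.mem_erase,
        Finset.mem_univ, true_and, and_true]
      tauto
    have hconj : ∀ l ∈ T, (starRingEnd ℂ) (z l) = (z l)⁻¹ := by
      intro l hl
      have hlj : l ≠ j := fun h => hT (h ▸ hl)
      have : z l * (starRingEnd ℂ) (z l) = 1 := by
        rw [Complex.mul_conj, ← Complex.sq_abs, hz l hlj]; norm_num
      exact eq_inv_of_mul_eq_one_left (by rw [mul_comm]; exact this)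
    rw [map_mul, Complex.conj_ofReal, map_prod]
    rw [Finset.prod_congr rfl hconj, hcompl, ← Finset.prod_sdiff hTsub]
    have hTne : (∏ l ∈ T, z l) ≠ 0 :=
      Finset.prod_ne_zero_iff.2 (fun l hl => hz0 l (fun h => hT (h ▸ hl)))
    rw [Finset.prod_inv_distrib]
    have hTT := mul_inv_cancel₀ hTne
    linear_combination (-((p (insert j T) : ℂ) * ∏ l ∈ univ.erase j \ T, z l)) * hTT
  rw [key, map_mul]
  have : Complex.abs (∏ l ∈ univ.erase j, z l) = 1 := by
    rw [map_prod]
    exact Finset.prod_eq_one (fun l hl => hz l (Finset.mem_erase.1 hl).1)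
  rw [this, one_mul, Complex.abs_conj]

lemma split_aux (q : Finset (Fin n) → ℝ) (j i : Fin n) (hij : i ≠ j) (z : Fin n → ℂ) (w : ℂ) :
    (∑ S ∈ (univ : Finset (Finset (Fin n))).filter (fun S => j ∉ S),
        (q S : ℂ) * ∏ l ∈ S, (Function.update z i w) l)
    = (∑ T ∈ (univ : Finset (Finset (Fin n))).filter (fun T => j ∉ T ∧ i ∉ T),
        (q (insert i T) : ℂ) * ∏ l ∈ T, z l) * w
      + ∑ T ∈ (univ : Finset (Finset (Fin n))).filter (fun T => j ∉ T ∧ i ∉ T),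
        (q T : ℂ) * ∏ l ∈ T, z l := by
  rw [← Finset.sum_filter_add_sum_filter_not
    ((univ : Finset (Finset (Fin n))).filter (fun S => j ∉ S)) (fun S => i ∈ S)]
  congr 1
  · rw [Finset.sum_mul]
    refine Finset.sum_nbij' (fun S => S.erase i) (fun T => insert i T) ?_ ?_ ?_ ?_ ?_
    · intro S hS
      simp only [Finset.filter_filter, mem_filter, mem_univ, true_and] at hS ⊢
      exact ⟨fun h => hS.1 (Finset.mem_of_mem_erase h), Finset.notMem_erase _ _⟩
    · intro T hT
      simp only [Finset.filter_filter, mem_filter, mem_univ, true_and] at hT ⊢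
      refine ⟨fun h => ?_, Finset.mem_insert_self _ _⟩
      rcases Finset.mem_insert.1 h with h | h
      · exact hij h.symm
      · exact hT.1 h
    · intro S hS
      simp only [Finset.filter_filter, mem_filter, mem_univ, true_and] at hS
      exact Finset.insert_erase hS.2
    · intro T hT
      simp only [Finset.filter_filter, mem_filter, mem_univ, true_and] at hT
      exact Finset.erase_insert hT.2
    · intro S hS
      simp only [Finset.filter_filter, mem_filter, mem_univ, true_and] at hS
      rw [Finset.insert_erase hS.2, mul_assoc]
      have h1 : ∏ l ∈ S, (Function.update z i w) l
          = (∏ l ∈ S.erase i, z l) * w := by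
        rw [← Finset.prod_erase_mul _ _ hS.2, Function.update_self]
        congr 1
        refine Finset.prod_congr rfl (fun l hl => ?_)
        exact Function.update_of_ne (Finset.mem_erase.1 hl).1 _ _
      rw [h1]
  · rw [Finset.filter_filter]
    refine Finset.sum_congr rfl (fun S hS => ?_)
    simp only [mem_filter, mem_univ, true_and] at hS
    congr 1
    refine Finset.prod_congr rfl (fun l hl => ?_)
    exact Function.update_of_ne (fun h : l = i => hS.2 (h ▸ hl)) _ _

lemma Aj_update (p : Finset (Fin n) → ℝ) (j i : Fin n) (hij : i ≠ j) (z : Fin n → ℂ) (w : ℂ) :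
    Aj p j (Function.update z i w) = AA p j i z * w + AB p j i z := by
  have := split_aux (fun S => p (insert j S)) j i hij z w
  rw [Aj, AA, AB]
  exact this

lemma Bj_update (p : Finset (Fin n) → ℝ) (j i : Fin n) (hij : i ≠ j) (z : Fin n → ℂ) (w : ℂ) :
    Bj p j (Function.update z i w) = BA p j i z * w + BB p j i z :=
  split_aux p j i hij z w

lemma core_mobius (a₁ a₀ b₁ b₀ : ℂ) (ha : Complex.abs a₀ < Complex.abs a₁)
    (hb : ∀ u : ℂ, Complex.abs u = 1 →
      Complex.abs (b₁ * u + b₀) ≤ Complex.abs (a₁ * u + a₀)) :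
    ∀ w : ℂ, 1 ≤ Complex.abs w →
      Complex.abs (b₁ * w + b₀) ≤ Complex.abs (a₁ * w + a₀) := by
  have hden : ∀ u : ℂ, Complex.abs u ≤ 1 → a₀ * u + a₁ ≠ 0 := by
    intro u hu h
    have : a₁ = -(a₀ * u) := by linear_combination h
    have h2 : Complex.abs a₁ ≤ Complex.abs a₀ := by
      rw [this, map_neg_eq_map, map_mul]
      calc Complex.abs a₀ * Complex.abs u ≤ Complex.abs a₀ * 1 :=
        mul_le_mul_of_nonneg_left hu (Complex.abs.nonneg _)
      _ = Complex.abs a₀ := mul_one _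
    exact absurd ha (not_lt.2 h2)
  set F : ℂ → ℂ := fun u => (b₀ * u + b₁) / (a₀ * u + a₁) with hF
  have hdiff : DiffContOnCl ℂ F (ball (0:ℂ) 1) := by
    apply DifferentiableOn.diffContOnCl
    rw [closure_ball (0:ℂ) one_ne_zero]
    apply DifferentiableOn.div
    · exact Differentiable.differentiableOn (by fun_prop)
    · exact Differentiable.differentiableOn (by fun_prop)
    · intro u hu
      exact hden u (by simpa [Complex.dist_eq] using (mem_closedBall.1 hu) : ‖u‖ ≤ 1)
  have hbound : ∀ u ∈ frontier (ball (0:ℂ) 1), ‖F u‖ ≤ 1 := by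
    intro u hu
    rw [frontier_ball (0:ℂ) one_ne_zero, mem_sphere, Complex.dist_eq, sub_zero] at hu
    have hu1 : Complex.abs u = 1 := hu
    have hu0 : u ≠ 0 := by intro h; rw [h] at hu1; simp at hu1
    have huinv : Complex.abs u⁻¹ = 1 := by rw [map_inv₀, hu1]; norm_num
    have hnum : b₀ * u + b₁ = u * (b₁ * u⁻¹ + b₀) := by field_simp; ring
    have hden' : a₀ * u + a₁ = u * (a₁ * u⁻¹ + a₀) := by field_simp; ring
    have : ‖F u‖ = Complex.abs (b₁ * u⁻¹ + b₀) / Complex.abs (a₁ * u⁻¹ + a₀) := by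
      simp only [hF, Complex.norm_eq_abs, map_div₀, hnum, hden', map_mul, hu1, one_mul]
    rw [this]
    have hd0 : 0 < Complex.abs (a₁ * u⁻¹ + a₀) := by
      have h3 := hden u hu1.le
      rw [hden'] at h3
      have h4 : a₁ * u⁻¹ + a₀ ≠ 0 := fun h => h3 (by rw [h, mul_zero])
      exact AbsoluteValue.pos _ h4
    rw [div_le_one hd0]
    exact hb u⁻¹ huinv
  intro w hw
  have hw0 : w ≠ 0 := by intro h; rw [h] at hw; simp at hw; linarith
  have hwinv : Complex.abs w⁻¹ ≤ 1 := by
    rw [map_inv₀]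
    exact inv_le_one_of_one_le₀ hw
  have hmem : w⁻¹ ∈ closure (ball (0:ℂ) 1) := by
    rw [closure_ball (0:ℂ) one_ne_zero]
    have hwinv' : ‖w⁻¹‖ ≤ 1 := hwinv
    simpa [Complex.dist_eq] using hwinv'
  have := Complex.norm_le_of_forall_mem_frontier_norm_le isBounded_ball hdiff hbound hmem
  have hd0 : a₀ * w⁻¹ + a₁ ≠ 0 := hden _ hwinv
  rw [hF] at this
  simp only [Complex.norm_eq_abs, map_div₀] at this
  rw [div_le_one (AbsoluteValue.pos _ hd0)] at this
  have hnum : b₁ * w + b₀ = w * (b₀ * w⁻¹ + b₁) := by field_simp; ring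
  have hden'' : a₁ * w + a₀ = w * (a₀ * w⁻¹ + a₁) := by field_simp; ring
  rw [hnum, hden'', map_mul, map_mul]
  exact mul_le_mul_of_nonneg_left this (Complex.abs.nonneg w)

lemma NZ (p : Finset (Fin n) → ℝ) (hne : ∀ S, p S ≠ 0)
    (hA : ∀ j : Fin n, ∀ z : Fin n → ℂ, (∀ i, i ≠ j → 1 ≤ Complex.abs (z i)) →
      Aj p j z ≠ 0)
    (j i : Fin n) (hij : i ≠ j) (z : Fin n → ℂ)
    (hz : ∀ l, l ≠ i → l ≠ j → 1 ≤ Complex.abs (z l)) : AA p j i z ≠ 0 := by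
  intro h0
  set s := (univ : Finset (Finset (Fin n))).filter (fun T => j ∉ T ∧ i ∉ T) with hs
  set Φ : Polynomial ℂ := ∑ T ∈ s,
    Polynomial.C ((p (insert j (insert i T)) : ℂ) * ∏ l ∈ T, z l) * Polynomial.X ^ T.card
    with hΦ
  have heval : ∀ r : ℂ, Φ.eval r = AA p j i (fun l => r * z l) := by
    intro r
    rw [hΦ, Polynomial.eval_finset_sum, AA]
    refine Finset.sum_congr rfl (fun T hT => ?_)
    rw [Polynomial.eval_mul, Polynomial.eval_C, Polynomial.eval_pow, Polynomial.eval_X,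
      Finset.prod_mul_distrib, Finset.prod_const]
    ring
  set Tmax : Finset (Fin n) := ({i, j} : Finset (Fin n))ᶜ with hTmax
  have hTmem : Tmax ∈ s := by
    simp only [hs, mem_filter, mem_univ, true_and, hTmax, Finset.mem_compl,
      Finset.mem_insert, Finset.mem_singleton, not_not]
    tauto
  have hins : insert j (insert i Tmax) = (univ : Finset (Fin n)) := by
    ext l
    simp only [Finset.mem_insert, hTmax, Finset.mem_compl, Finset.mem_singleton,
      Finset.mem_univ, iff_true]
    tauto
  have hzT : (∏ l ∈ Tmax, z l) ≠ 0 := by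
    rw [Finset.prod_ne_zero_iff]
    intro l hl
    have hl' : l ≠ i ∧ l ≠ j := by
      simpa [hTmax, Finset.mem_compl] using hl
    intro h
    have := hz l hl'.1 hl'.2
    rw [h] at this; simp at this; linarith
  have hcoeff : Φ.coeff Tmax.card = (p univ : ℂ) * ∏ l ∈ Tmax, z l := by
    rw [hΦ, Polynomial.finset_sum_coeff]
    rw [Finset.sum_eq_single Tmax]
    · rw [Polynomial.coeff_C_mul, Polynomial.coeff_X_pow, if_pos rfl, mul_one, hins]
    · intro T hT hTne
      rw [Polynomial.coeff_C_mul, Polynomial.coeff_X_pow, if_neg, mul_zero]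
      intro hcard
      apply hTne
      simp only [hs, mem_filter, mem_univ, true_and] at hT
      have hsub : T ⊆ Tmax := by
        intro l hl
        simp only [hTmax, Finset.mem_compl, Finset.mem_insert, Finset.mem_singleton]
        push_neg
        exact ⟨fun h => hT.2 (h ▸ hl), fun h => hT.1 (h ▸ hl)⟩
      exact (Finset.eq_of_subset_of_card_le hsub (le_of_eq hcard)).symm ▸ rfl
    · intro h; exact absurd hTmem h
  have hΦne : Φ ≠ 0 := by
    intro h
    rw [h, Polynomial.coeff_zero] at hcoeff
    exact (mul_ne_zero (Complex.ofReal_ne_zero.2 (hne univ)) hzT) hcoeff.symm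
  have hroots : {x : ℝ | Φ.eval (x : ℂ) = 0}.Finite := by
    have hsubs : {x : ℝ | Φ.eval (x:ℂ) = 0}
        ⊆ (fun x : ℝ => (x:ℂ)) ⁻¹' {u : ℂ | Φ.IsRoot u} := fun x hx => hx
    exact Set.Finite.subset
      (Set.Finite.preimage (Complex.ofReal_injective.injOn)
        (Polynomial.finite_setOf_isRoot hΦne)) hsubs
  have hsel : ∀ m : ℕ, ∃ r : ℝ, 1 < r ∧ r < 1 + 1/(m+1) ∧ Φ.eval (r:ℂ) ≠ 0 := by
    intro m
    have hlt : (1:ℝ) < 1 + 1/(m+1) := by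
      have : (0:ℝ) < 1/(m+1) := by positivity
      linarith
    obtain ⟨r, hr⟩ := ((Set.Ioo_infinite hlt).diff hroots).nonempty
    exact ⟨r, hr.1.1, hr.1.2, hr.2⟩
  choose t ht1 ht2 ht3 using hsel
  have htend : Tendsto t atTop (nhds 1) := by
    have hupper : Tendsto (fun m : ℕ => 1 + 1/((m:ℝ)+1)) atTop (nhds 1) := by
      have h : Tendsto (fun m : ℕ => 1 / ((m : ℝ) + 1)) atTop (nhds 0) :=
        tendsto_one_div_add_atTop_nhds_zero_nat
      have h2 : Tendsto (fun m : ℕ => (1:ℝ) + 1/((m:ℝ)+1)) atTop (nhds (1+0)) :=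
        Tendsto.const_add 1 h
      simpa using h2
    exact tendsto_of_tendsto_of_tendsto_of_le_of_le tendsto_const_nhds hupper
      (fun m => (ht1 m).le) (fun m => (ht2 m).le)
  have hcont : ∀ q : Finset (Fin n) → ℝ, Continuous (fun r : ℝ =>
      ∑ T ∈ s, (q T : ℂ) * ∏ l ∈ T, ((r:ℂ) * z l)) := by
    intro q
    apply continuous_finset_sum
    intro T _
    apply Continuous.mul continuous_const
    apply continuous_finset_prod
    intro l _
    exact Complex.continuous_ofReal.mul continuous_const
  have hineq : ∀ m, Complex.abs (AB p j i (fun l => (t m : ℂ) * z l))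
      ≤ Complex.abs (AA p j i (fun l => (t m : ℂ) * z l)) := by
    intro m
    set ζ : Fin n → ℂ := fun l => (t m : ℂ) * z l with hζ
    have hfne : AA p j i ζ ≠ 0 := by rw [← heval]; exact ht3 m
    by_contra hle
    push_neg at hle
    set w₀ : ℂ := -(AB p j i ζ / AA p j i ζ) with hw₀
    have hw₀abs : 1 ≤ Complex.abs w₀ := by
      rw [hw₀, map_neg_eq_map, map_div₀, le_div_iff₀ (AbsoluteValue.pos _ hfne)]
      linarith
    have hcoords : ∀ l, l ≠ j → 1 ≤ Complex.abs ((Function.update ζ i w₀) l) := by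
      intro l hlj
      by_cases hli : l = i
      · subst hli; rw [Function.update_self]; exact hw₀abs
      · rw [Function.update_of_ne hli]
        have h1 : 1 ≤ Complex.abs (z l) := hz l hli hlj
        rw [hζ]
        simp only [map_mul, Complex.abs_ofReal]
        have h2 : (1:ℝ) ≤ |t m| := by
          have := ht1 m; rw [abs_of_pos (by linarith)]; linarith
        nlinarith
    apply hA j (Function.update ζ i w₀) hcoords
    rw [Aj_update p j i hij ζ w₀, hw₀]
    field_simp
    ring
  have hglim : Tendsto (fun m => Complex.abs (AB p j i (fun l => (t m:ℂ) * z l)))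
      atTop (nhds (Complex.abs (AB p j i z))) := by
    have hc : Continuous (fun r : ℝ => AB p j i (fun l => (r:ℂ) * z l)) := hcont _
    have h1 := ((Complex.continuous_abs.comp hc).tendsto 1).comp htend
    have hone : (fun l => ((1:ℝ):ℂ) * z l) = z := by funext l; simp
    simpa [Function.comp_def, hone] using h1
  have hflim : Tendsto (fun m => Complex.abs (AA p j i (fun l => (t m:ℂ) * z l)))
      atTop (nhds 0) := by
    have hc : Continuous (fun r : ℝ => AA p j i (fun l => (r:ℂ) * z l)) := hcont _
    have h1 := ((Complex.continuous_abs.comp hc).tendsto 1).comp htend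
    have hone : (fun l => ((1:ℝ):ℂ) * z l) = z := by funext l; simp
    simp only [Function.comp_def, hone] at h1
    simpa [hone, h0] using h1
  have hABle : Complex.abs (AB p j i z) ≤ 0 :=
    le_of_tendsto_of_tendsto' hglim hflim hineq
  have hAB : AB p j i z = 0 := by
    have := Complex.abs.nonneg (AB p j i z)
    have habs : Complex.abs (AB p j i z) = 0 := le_antisymm hABle this
    exact Complex.abs.eq_zero.1 habs
  have hcoords : ∀ l, l ≠ j → 1 ≤ Complex.abs ((Function.update z i 1) l) := by
    intro l hlj
    by_cases hli : l = i
    · subst hli; rw [Function.update_self]; simp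
    · rw [Function.update_of_ne hli]; exact hz l hli hlj
  apply hA j (Function.update z i 1) hcoords
  rw [Aj_update p j i hij z 1, hAB, h0]
  ring

lemma mainL (p : Finset (Fin n) → ℝ) (hne : ∀ S, p S ≠ 0)
    (hsym : ∀ S : Finset (Fin n), p S = p Sᶜ)
    (hA : ∀ j : Fin n, ∀ z : Fin n → ℂ, (∀ i, i ≠ j → 1 ≤ Complex.abs (z i)) →
      Aj p j z ≠ 0) (j : Fin n) :
    ∀ (N : ℕ) (z : Fin n → ℂ), (∀ l, l ≠ j → 1 ≤ Complex.abs (z l)) →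
      ((univ.erase j).filter (fun l => 1 < Complex.abs (z l))).card ≤ N →
      Complex.abs (Bj p j z) ≤ Complex.abs (Aj p j z) := by
  intro N
  induction N with
  | zero =>
    intro z hz hcard
    have hempty : ((univ.erase j).filter (fun l => 1 < Complex.abs (z l))) = ∅ :=
      Finset.card_eq_zero.1 (Nat.le_zero.1 hcard)
    have hone : ∀ l, l ≠ j → Complex.abs (z l) = 1 := by
      intro l hl
      have h1 := hz l hl
      have h2 : l ∉ (univ.erase j).filter (fun l => 1 < Complex.abs (z l)) := by
        rw [hempty]; exact Finset.notMem_empty _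
      simp only [mem_filter, Finset.mem_erase, Finset.mem_univ, true_and, and_true] at h2
      push_neg at h2
      exact le_antisymm (h2 hl) h1
    exact le_of_eq (torus_abs p hsym j z hone)
  | succ N ih =>
    intro z hz hcard
    by_cases hempty : ((univ.erase j).filter (fun l => 1 < Complex.abs (z l))) = ∅
    · have hone : ∀ l, l ≠ j → Complex.abs (z l) = 1 := by
        intro l hl
        have h1 := hz l hl
        have h2 : l ∉ (univ.erase j).filter (fun l => 1 < Complex.abs (z l)) := by
          rw [hempty]; exact Finset.notMem_empty _
        simp only [mem_filter, Finset.mem_erase, Finset.mem_univ, true_and, and_true] at h2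
        push_neg at h2
        exact le_antisymm (h2 hl) h1
      exact le_of_eq (torus_abs p hsym j z hone)
    · obtain ⟨i, hi⟩ := Finset.nonempty_of_ne_empty hempty
      simp only [mem_filter, Finset.mem_erase, Finset.mem_univ, true_and, and_true] at hi
      obtain ⟨hij, hzi⟩ := hi
      have ha1 : AA p j i z ≠ 0 :=
        NZ p hne hA j i hij z (fun l hli hlj => hz l hlj)
      have ha0 : Complex.abs (AB p j i z) < Complex.abs (AA p j i z) := by
        by_contra hle
        push_neg at hle
        set w₀ : ℂ := -(AB p j i z / AA p j i z) with hw₀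
        have hw₀abs : 1 ≤ Complex.abs w₀ := by
          rw [hw₀, map_neg_eq_map, map_div₀, le_div_iff₀ (AbsoluteValue.pos _ ha1)]
          linarith
        have hcoords : ∀ l, l ≠ j → 1 ≤ Complex.abs ((Function.update z i w₀) l) := by
          intro l hlj
          by_cases hli : l = i
          · subst hli; rw [Function.update_self]; exact hw₀abs
          · rw [Function.update_of_ne hli]; exact hz l hlj
        apply hA j (Function.update z i w₀) hcoords
        rw [Aj_update p j i hij z w₀, hw₀]
        field_simp
        ring
      have hbnd : ∀ u : ℂ, Complex.abs u = 1 →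
          Complex.abs (BA p j i z * u + BB p j i z)
            ≤ Complex.abs (AA p j i z * u + AB p j i z) := by
        intro u hu
        set zu := Function.update z i u with hzu
        have hzcoords : ∀ l, l ≠ j → 1 ≤ Complex.abs (zu l) := by
          intro l hlj
          by_cases hli : l = i
          · subst hli; rw [hzu, Function.update_self, hu]
          · rw [hzu, Function.update_of_ne hli]; exact hz l hlj
        have hfilter : ((univ.erase j).filter (fun l => 1 < Complex.abs (zu l)))
            = ((univ.erase j).filter (fun l => 1 < Complex.abs (z l))).erase i := by
          ext l
          simp only [mem_filter, Finset.mem_erase, Finset.mem_univ, true_and, and_true]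
          constructor
          · rintro ⟨hlj, hlt⟩
            have hli : l ≠ i := by
              intro h
              subst h
              rw [hzu, Function.update_self, hu] at hlt
              exact lt_irrefl _ hlt
            rw [hzu, Function.update_of_ne hli] at hlt
            exact ⟨hli, hlj, hlt⟩
          · rintro ⟨hli, hlj, hlt⟩
            rw [hzu, Function.update_of_ne hli]
            exact ⟨hlj, hlt⟩
        have hcard2 : ((univ.erase j).filter (fun l => 1 < Complex.abs (zu l))).card ≤ N := by
          rw [hfilter]
          have himem : i ∈ (univ.erase j).filter (fun l => 1 < Complex.abs (z l)) := by
            simp only [mem_filter, Finset.mem_erase, Finset.mem_univ, true_and, and_true]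
            exact ⟨hij, hzi⟩
          have := Finset.card_erase_of_mem himem
          omega
        have := ih zu hzcoords hcard2
        rwa [hzu, Aj_update p j i hij z u, Bj_update p j i hij z u] at this
      have hcore := core_mobius (AA p j i z) (AB p j i z) (BA p j i z) (BB p j i z)
        ha0 hbnd (z i) (le_of_lt hzi)
      have heqA : Aj p j z = AA p j i z * z i + AB p j i z := by
        have := Aj_update p j i hij z (z i)
        rwa [Function.update_eq_self] at this
      have heqB : Bj p j z = BA p j i z * z i + BB p j i z := by
        have := Bj_update p j i hij z (z i)
        rwa [Function.update_eq_self] at this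
      rw [heqA, heqB]
      exact hcore

end LYaux

theorem stmt8 {n : ℕ} (p : Finset (Fin n) → ℝ)
    (hne : ∀ S, p S ≠ 0)
    (hsym : ∀ S : Finset (Fin n), p S = p Sᶜ)
    (hA : ∀ j : Fin n, ∀ z : Fin n → ℂ, (∀ i, i ≠ j → 1 ≤ ‖z i‖) →
      (∑ S ∈ (univ : Finset (Finset (Fin n))).filter (fun S => j ∉ S),
          (p (insert j S) : ℂ) * ∏ i ∈ S, z i) ≠ 0)
    (z : Fin n → ℂ) (hz : ∀ i, 1 ≤ ‖z i‖)
    (hz' : ∃ i, 1 < ‖z i‖) :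
    (∑ S : Finset (Fin n), (p S : ℂ) * ∏ i ∈ S, z i) ≠ 0 := by
  obtain ⟨k, hk⟩ := hz'
  have hA' : ∀ j : Fin n, ∀ z : Fin n → ℂ, (∀ i, i ≠ j → 1 ≤ Complex.abs (z i)) →
      Aj p j z ≠ 0 := hA
  have hAne : Aj p k z ≠ 0 := hA' k z (fun i hi => hz i)
  have hBle : Complex.abs (Bj p k z) ≤ Complex.abs (Aj p k z) :=
    mainL p hne hsym hA' k
      ((univ.erase k).filter (fun l => 1 < Complex.abs (z l))).card z
      (fun l _ => hz l) le_rfl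
  rw [sum_split p k z]
  intro h
  have h1 : Aj p k z * z k = -(Bj p k z) := by linear_combination h
  have h2 : Complex.abs (Aj p k z) * Complex.abs (z k) = Complex.abs (Bj p k z) := by
    rw [← map_mul, h1, map_neg_eq_map]
  have h3 : 0 < Complex.abs (Aj p k z) := AbsoluteValue.pos _ hAne
  have hk' : 1 < Complex.abs (z k) := hk
  nlinarith
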